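/- Let E be a finite-dimensional real normed vector space with a continuous geometric structure B that is pointwise positive definite (B x v v > 0 for every x ∈ E and every v ≠ 0) or pointwise negative definite (B x v v < 0 for every x and every v ≠ 0). Let F : E → ℝ be differentiable with a left-gradient field gF with respect to B, let T > 0, and let γ : ℝ → E be continuously differentiable with deriv γ t = gF (γ t) for all t and γ 0 = γ T. Then γ is constant on [0, T]; that is, the left-gradient vector field of F admits no non-trivial periodic orbits. The same conclusion holds for a right-gradient field of F. -/

import Mathlib

open Set

theorem aux_no_periodic
    {E : Type*} [NormedAddCommGroup E] [NormedSpace ℝ E] [FiniteDimensional ℝ E]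
    (B : E → (E →ₗ[ℝ] E →ₗ[ℝ] ℝ))
    (hBcont : Continuous fun p : E × E × E => B p.1 p.2.1 p.2.2)
    (hpos : ∀ x v, v ≠ 0 → 0 < B x v v)
    (F : E → ℝ) (hF : Differentiable ℝ F)
    (gF : E → E) (T : ℝ) (hT : 0 < T)
    (γ : ℝ → E) (hγ : ContDiff ℝ 1 γ)
    (hflow : ∀ t, deriv γ t = gF (γ t)) (hper : γ 0 = γ T)
    (hgrad : ∀ t, B (γ t) (gF (γ t)) (gF (γ t)) = fderiv ℝ F (γ t) (gF (γ t))) :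
    ∀ t ∈ Set.Icc (0 : ℝ) T, γ t = γ 0 := by
  have hγd : Differentiable ℝ γ := hγ.differentiable one_ne_zero
  set g : ℝ → ℝ := fun t => B (γ t) (gF (γ t)) (gF (γ t)) with hg
  have hgFγ : (fun t => gF (γ t)) = deriv γ := by funext t; rw [hflow]
  have hcont_gFγ : Continuous fun t => gF (γ t) := by
    rw [hgFγ]; exact hγ.continuous_deriv le_rfl
  have hgcont : Continuous g :=
    hBcont.comp ((hγ.continuous).prodMk (hcont_gFγ.prodMk hcont_gFγ))
  have hfd : ∀ t, HasDerivAt (fun s => F (γ s)) (g t) t := by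
    intro t
    have h1 := (hF (γ t)).hasFDerivAt.comp_hasDerivAt t (hγd t).hasDerivAt
    rw [hg]
    simp only [hflow t] at h1 ⊢
    rw [hgrad t]
    exact h1
  have hg0 : ∀ t, 0 ≤ g t := by
    intro t
    rcases eq_or_ne (gF (γ t)) 0 with h | h
    · simp [hg, h]
    · exact (hpos _ _ h).le
  have hmono : Monotone fun s => F (γ s) := by
    apply monotone_of_deriv_nonneg
    · exact fun t => (hfd t).differentiableAt
    · intro t; rw [(hfd t).deriv]; exact hg0 t
  have hconst : ∀ t ∈ Icc (0:ℝ) T, F (γ t) = F (γ 0) := by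
    intro t ht
    refine le_antisymm ?_ (hmono ht.1)
    calc F (γ t) ≤ F (γ T) := hmono ht.2
      _ = F (γ 0) := by rw [← hper]
  have hgIoo : ∀ t ∈ Ioo (0:ℝ) T, g t = 0 := by
    intro t ht
    have heq : (fun s => F (γ s)) =ᶠ[nhds t] fun _ => F (γ 0) := by
      filter_upwards [Ioo_mem_nhds ht.1 ht.2] with s hs
      exact hconst s (Ioo_subset_Icc_self hs)
    have h2 := heq.deriv_eq
    rw [(hfd t).deriv] at h2
    simpa using h2
  have hgIcc : ∀ t ∈ Icc (0:ℝ) T, g t = 0 := by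
    have hclosed : IsClosed {t | g t = 0} := isClosed_eq hgcont continuous_const
    intro t ht
    have hsub : Icc (0:ℝ) T ⊆ {t | g t = 0} := by
      rw [← closure_Ioo hT.ne]
      exact hclosed.closure_subset_iff.mpr fun s hs => hgIoo s hs
    exact hsub ht
  have hgF0 : ∀ t ∈ Icc (0:ℝ) T, gF (γ t) = 0 := by
    intro t ht
    by_contra h
    exact absurd (hgIcc t ht) (ne_of_gt (hpos _ _ h))
  apply constant_of_has_deriv_right_zero
  · exact hγ.continuous.continuousOn
  · intro s hs
    have h3 : HasDerivAt γ 0 s := by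
      have h4 := (hγd s).hasDerivAt
      rwa [hflow s, hgF0 s (Ico_subset_Icc_self hs)] at h4
    exact h3.hasDerivWithinAt

/-- If the geometric structure `B` is pointwise positive definite or pointwise negative
definite, then gradient-like vector fields have no non-trivial periodic orbits: any
periodic integral curve of a left- (or right-) gradient field of `F` is constant. -/
theorem no_periodic_orbits_of_definite
    {E : Type*} [NormedAddCommGroup E] [NormedSpace ℝ E] [FiniteDimensional ℝ E]
    (B : E → (E →ₗ[ℝ] E →ₗ[ℝ] ℝ))
    (hB1 : ∀ x v, (∀ w, B x v w = 0) → v = 0)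
    (hB2 : ∀ x w, (∀ v, B x v w = 0) → w = 0)
    (hBcont : Continuous fun p : E × E × E => B p.1 p.2.1 p.2.2)
    (hdef : (∀ x v, v ≠ 0 → 0 < B x v v) ∨ (∀ x v, v ≠ 0 → B x v v < 0))
    (F : E → ℝ) (hF : Differentiable ℝ F)
    (gF : E → E) (T : ℝ) (hT : 0 < T)
    (γ : ℝ → E) (hγ : ContDiff ℝ 1 γ)
    (hflow : ∀ t, deriv γ t = gF (γ t)) (hper : γ 0 = γ T) :
    ((∀ x w, B x (gF x) w = fderiv ℝ F x w) → ∀ t ∈ Set.Icc (0 : ℝ) T, γ t = γ 0) ∧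
    ((∀ x w, B x w (gF x) = fderiv ℝ F x w) → ∀ t ∈ Set.Icc (0 : ℝ) T, γ t = γ 0) := by
  rcases hdef with hpos | hneg
  · refine ⟨fun hL => ?_, fun hR => ?_⟩
    · exact aux_no_periodic B hBcont hpos F hF gF T hT γ hγ hflow hper
        (fun t => hL (γ t) (gF (γ t)))
    · exact aux_no_periodic B hBcont hpos F hF gF T hT γ hγ hflow hper
        (fun t => hR (γ t) (gF (γ t)))
  · -- apply the positive case to `-B` and `-F`
    set B' : E → (E →ₗ[ℝ] E →ₗ[ℝ] ℝ) := fun x => -(B x) with hB'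
    have hB'cont : Continuous fun p : E × E × E => B' p.1 p.2.1 p.2.2 := by
      refine hBcont.neg.congr ?_
      intro p
      simp [hB']
    have hB'pos : ∀ x v, v ≠ 0 → 0 < B' x v v := by
      intro x v hv
      simpa [hB', LinearMap.neg_apply] using hneg x v hv
    have hF' : Differentiable ℝ (fun y => -F y) := hF.neg
    refine ⟨fun hL => ?_, fun hR => ?_⟩
    · refine aux_no_periodic B' hB'cont hB'pos (fun y => -F y) hF' gF T hT γ hγ
        hflow hper (fun t => ?_)
      rw [fderiv_fun_neg]
      simp [hB', LinearMap.neg_apply, hL (γ t) (gF (γ t))]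
    · refine aux_no_periodic B' hB'cont hB'pos (fun y => -F y) hF' gF T hT γ hγ
        hflow hper (fun t => ?_)
      rw [fderiv_fun_neg]
      simp [hB', LinearMap.neg_apply, hR (γ t) (gF (γ t))]
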